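/- Let r ≥ 1 and work in the field ℚ(u_1,…,u_r) of rational functions in r indeterminates over ℚ. Then the Weyl denominator of Spin(2r+1) factors as det[ u_i^{2(r − j) + 1} − u_i^{−(2(r − j) + 1)} ]_{i,j=1}^{r} = ∏_{i=1}^{r} (u_i − u_i^{−1}) · det[ (u_i^2 + u_i^{−2})^{r − j} ]_{i,j=1}^{r}. -/

import Mathlib

open Finset MvPolynomial

open Polynomial in
/-- The monic degree-`k` polynomial with `P k (x + x⁻¹) = x⁻ᵏ * ∑_{m<2k+1} xᵐ`. -/
noncomputable def chebPaux {R : Type*} [CommRing R] : ℕ → R[X]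
  | 0 => 1
  | 1 => Polynomial.X + 1
  | (k+2) => Polynomial.X * chebPaux (k+1) - chebPaux k

open Polynomial in
lemma chebPaux_monic_deg {R : Type*} [CommRing R] [Nontrivial R] :
    ∀ k : ℕ, (chebPaux (R := R) k).Monic ∧ (chebPaux (R := R) k).degree = k := by
  intro k
  induction k using Nat.twoStepInduction with
  | zero => exact ⟨monic_one, degree_one⟩
  | one =>
    constructor
    · simpa [chebPaux] using monic_X_add_C (1 : R)
    · simpa [chebPaux] using degree_X_add_C (1 : R)
  | more k ih0 ih1 =>
    obtain ⟨hm0, hd0⟩ := ih0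
    obtain ⟨hm1, hd1⟩ := ih1
    have hmX : (Polynomial.X * chebPaux (R := R) (k+1)).Monic := monic_X.mul hm1
    have hdX : (Polynomial.X * chebPaux (R := R) (k+1)).degree = ((k + 2 : ℕ) : WithBot ℕ) := by
      rw [hm1.degree_mul, degree_X, hd1]
      exact_mod_cast (by omega : 1 + (k+1) = k+2)
    have hlt : (chebPaux (R := R) k).degree < (Polynomial.X * chebPaux (R := R) (k+1)).degree := by
      rw [hdX, hd0]
      exact_mod_cast Nat.lt_succ_of_lt (Nat.lt_succ_self k)
    constructor
    · show (Polynomial.X * chebPaux (k+1) - chebPaux k).Monic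
      rw [sub_eq_add_neg]
      exact hmX.add_of_left (by rwa [degree_neg])
    · show (Polynomial.X * chebPaux (k+1) - chebPaux k).degree = _
      rw [degree_sub_eq_left_of_degree_lt hlt, hdX]

lemma geom_shift {K : Type*} [Field K] (x : K) (n : ℕ) :
    (∑ m ∈ range (n+2), x ^ m) = 1 + x + x ^ 2 * ∑ m ∈ range n, x ^ m := by
  induction n with
  | zero => simp [Finset.sum_range_succ]
  | succ n ih =>
    rw [Finset.sum_range_succ, ih, Finset.sum_range_succ]
    ring

lemma geom_id {K : Type*} [Field K] (x : K) (n : ℕ) :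
    (x ^ 2 + 1) * (∑ m ∈ range (n+2), x ^ m) =
      (∑ m ∈ range (n+4), x ^ m) + x ^ 2 * ∑ m ∈ range n, x ^ m := by
  rw [show n + 4 = (n + 2) + 2 from rfl, geom_shift x (n+2), geom_shift x n]
  ring

open Polynomial in
lemma chebPaux_eval {K : Type*} [Field K] (x : K) (hx : x ≠ 0) :
    ∀ k : ℕ, x ^ k * (chebPaux k).eval (x + x⁻¹) = ∑ m ∈ range (2*k+1), x ^ m := by
  intro k
  induction k using Nat.twoStepInduction with
  | zero => simp [chebPaux]
  | one =>
    show x ^ 1 * (Polynomial.X + 1).eval (x + x⁻¹) = _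
    simp only [Polynomial.eval_add, Polynomial.eval_X, Polynomial.eval_one]
    have hinv : x * x⁻¹ = 1 := mul_inv_cancel₀ hx
    rw [show 2*1+1 = 3 from rfl]
    rw [Finset.sum_range_succ, Finset.sum_range_succ, Finset.sum_range_one]
    linear_combination hinv
  | more k ih0 ih1 =>
    have hinv : x * x⁻¹ = 1 := mul_inv_cancel₀ hx
    rw [show 2*(k+1)+1 = 2*k+3 from by ring] at ih1
    have hid := geom_id x (2*k+1)
    rw [show 2*k+1+2 = 2*k+3 from by ring, show 2*k+1+4 = 2*k+5 from by ring] at hid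
    show x ^ (k+2) * (Polynomial.X * chebPaux (k+1) - chebPaux k).eval (x + x⁻¹) = _
    rw [show 2*(k+2)+1 = 2*k+5 from by ring]
    simp only [Polynomial.eval_sub, Polynomial.eval_mul, Polynomial.eval_X]
    linear_combination (x^2 + x*x⁻¹) * ih1 - x^2 * ih0 + hid +
      (∑ m ∈ range (2*k+3), x ^ m) * hinv

open Polynomial in
lemma entry_factor {K : Type*} [Field K] (u : K) (hu : u ≠ 0) (k : ℕ) :
    u ^ (2*(k:ℤ)+1) - u ^ (-(2*(k:ℤ)+1)) =
      (u - u⁻¹) * (chebPaux k).eval (u^2 + (u^2)⁻¹) := by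
  have hx : (u^2 : K) ≠ 0 := pow_ne_zero 2 hu
  have heval := chebPaux_eval (u^2) hx k
  have hgeom := geom_sum_mul (u^2) (2*k+1)
  have hinvu : u * u⁻¹ = 1 := mul_inv_cancel₀ hu
  have h3 : u ^ (2*k+1) * (u ^ (2*k+1))⁻¹ = 1 := mul_inv_cancel₀ (pow_ne_zero _ hu)
  have hz1 : u ^ (2*(k:ℤ)+1) = u ^ (2*k+1) := by
    rw [show (2*(k:ℤ)+1) = ((2*k+1 : ℕ) : ℤ) from by push_cast; ring, zpow_natCast]
  have hz2 : u ^ (-(2*(k:ℤ)+1)) = (u ^ (2*k+1))⁻¹ := by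
    rw [show (-(2*(k:ℤ)+1)) = -((2*k+1 : ℕ) : ℤ) from by push_cast; ring, zpow_neg, zpow_natCast]
  rw [hz1, hz2]
  apply mul_right_cancel₀ (b := u ^ (2*k+1)) (pow_ne_zero _ hu)
  linear_combination (-1 : K) * h3 + (u*u⁻¹ - u^2) * heval - hgeom +
    (∑ m ∈ range (2*k+1), (u^2) ^ m) * hinvu

/-- Factorization of the Weyl denominator of Spin(2r+1):
det[uᵢ^{2(r−j)+1} − uᵢ^{−(2(r−j)+1)}] = ∏ᵢ (uᵢ − uᵢ⁻¹) · det[(uᵢ² + uᵢ⁻²)^{r−j}]. -/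
theorem spin_odd_weyl_denominator_factorization (r : ℕ) (hr : 1 ≤ r) :
    let K := FractionRing (MvPolynomial (Fin r) ℚ)
    let u : Fin r → K := fun i => algebraMap (MvPolynomial (Fin r) ℚ) K (X i)
    Matrix.det (Matrix.of fun i j : Fin r =>
        u i ^ (2 * ((r : ℤ) - 1 - (j.val : ℤ)) + 1) -
        u i ^ (-(2 * ((r : ℤ) - 1 - (j.val : ℤ)) + 1))) =
    (∏ i : Fin r, (u i - (u i)⁻¹)) *
    Matrix.det (Matrix.of fun i j : Fin r =>
        (u i ^ 2 + (u i ^ 2)⁻¹) ^ (r - 1 - j.val)) := by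
  intro K u
  have hu : ∀ i, u i ≠ 0 := fun i =>
    (map_ne_zero_iff _ (IsFractionRing.injective (MvPolynomial (Fin r) ℚ) K)).mpr (X_ne_zero i)
  set v : Fin r → K := fun i => (u i) ^ 2 + ((u i) ^ 2)⁻¹ with hv
  have step1 : (Matrix.of fun i j : Fin r =>
        u i ^ (2 * ((r : ℤ) - 1 - (j.val : ℤ)) + 1) -
        u i ^ (-(2 * ((r : ℤ) - 1 - (j.val : ℤ)) + 1))) =
      Matrix.of (fun i j : Fin r =>
        (u i - (u i)⁻¹) * (chebPaux (r - 1 - j.val)).eval (v i)) := by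
    ext i j
    have hcast : (2 * ((r : ℤ) - 1 - (j.val : ℤ)) + 1) = 2 * ((r - 1 - j.val : ℕ) : ℤ) + 1 := by
      have := j.isLt
      push_cast [Nat.cast_sub (by omega : j.val ≤ r - 1), Nat.cast_sub (by omega : 1 ≤ r)]
      ring
    simp only [Matrix.of_apply, hcast]
    exact entry_factor (u i) (hu i) (r - 1 - j.val)
  have hmc := Matrix.det_mul_column (fun i => u i - (u i)⁻¹)
    (Matrix.of fun i j : Fin r => (chebPaux (r - 1 - j.val)).eval (v i))
  simp only [Matrix.of_apply] at hmc
  rw [step1, hmc]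
  congr 1
  -- now the determinant identity
  have hC : Matrix.of (fun i j : Fin r => (chebPaux (r - 1 - j.val)).eval (v i)) =
      (Matrix.of (fun i j : Fin r => (chebPaux j.val).eval (v i))).submatrix id Fin.revPerm := by
    ext i j
    simp only [Matrix.submatrix_apply, Matrix.of_apply, id_eq, Fin.revPerm_apply, Fin.val_rev]
    congr 2
    omega
  have hV : Matrix.of (fun i j : Fin r => (v i) ^ (r - 1 - j.val)) =
      (Matrix.vandermonde v).submatrix id Fin.revPerm := by
    ext i j
    simp only [Matrix.submatrix_apply, Matrix.of_apply, id_eq, Fin.revPerm_apply, Fin.val_rev,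
      Matrix.vandermonde]
    congr 1
    omega
  have hdet : (Matrix.vandermonde v).det =
      (Matrix.of (fun i j : Fin r => (chebPaux j.val).eval (v i))).det := by
    apply Matrix.det_eval_matrixOfPolynomials_eq_det_vandermonde
    · intro i
      exact Polynomial.natDegree_eq_of_degree_eq_some (chebPaux_monic_deg i.val).2
    · intro i
      exact (chebPaux_monic_deg i.val).1
  show (Matrix.of (fun i j : Fin r => (chebPaux (r - 1 - j.val)).eval (v i))).det =
    (Matrix.of (fun i j : Fin r => (v i) ^ (r - 1 - j.val))).det
  rw [hC, hV, Matrix.det_permute', Matrix.det_permute', ← hdet]
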